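/- Let n ≥ 2 be even and a : {1,…,n} → ℕ with M := Σ_{i=1}^n a_i > 0. Consider the min-max-min selection problem with feasible set X = { x ∈ {0,1}^n : Σ_i x_i = n/2 }, nominal costs ĉ_i = a_i, deviations d_i = M for all i, budget Γ = 1 and K = 2 solutions. Then min over (x^1,x^2) ∈ X² of max over c ∈ U^1(ĉ,d) of min(c^⊤x^1, c^⊤x^2) equals M/2 if and only if there exists a subset S ⊆ {1,…,n} with |S| = n/2 and Σ_{i∈S} a_i = M/2. -/
import Mathlib


open Finset

/-- The discrete budgeted uncertainty set
`U^Γ(ĉ,d) = { c : c i = ĉ i + δ i * d i, δ ∈ {0,1}^n, ∑ i, δ i ≤ Γ }`,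
with the 0-1 vector `δ` identified with the set `D` of its nonzero coordinates. -/
noncomputable def budgetU (n : ℕ) (chat d : Fin n → ℝ) (Γ : ℕ) : Finset (Fin n → ℝ) :=
  (((Finset.univ : Finset (Fin n)).powerset.filter fun D => D.card ≤ Γ).image
    fun D i => chat i + (if i ∈ D then d i else 0))

lemma budgetU_nonempty (n : ℕ) (chat d : Fin n → ℝ) (Γ : ℕ) :
    (budgetU n chat d Γ).Nonempty :=
  ⟨_, Finset.mem_image.mpr ⟨∅, by simp, rfl⟩⟩

/-- The feasible set of the selection problem: all `p`-element subsets of `[n]`.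
It is nonempty whenever `p ≤ n`. -/
lemma selection_nonempty (n p : ℕ) (h : p ≤ n) :
    (Finset.univ.filter fun S : Finset (Fin n) => S.card = p).Nonempty := by
  obtain ⟨t, -, ht⟩ := Finset.exists_subset_card_eq
    (s := (Finset.univ : Finset (Fin n))) (n := p) (by simpa using h)
  exact ⟨t, Finset.mem_filter.mpr ⟨Finset.mem_univ _, ht⟩⟩

section helper
variable {n : ℕ} (a : Fin n → ℕ) (M : ℕ)

lemma mem_budgetU_of (D : Finset (Fin n)) (hD : D.card ≤ 1) :
    (fun i => (a i : ℝ) + if i ∈ D then (M : ℝ) else 0) ∈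
      budgetU n (fun i => (a i : ℝ)) (fun _ => (M : ℝ)) 1 :=
  Finset.mem_image.mpr ⟨D, Finset.mem_filter.mpr
    ⟨Finset.mem_powerset.mpr (Finset.subset_univ _), hD⟩, rfl⟩

lemma sum_budget_singleton (j : Fin n) (S : Finset (Fin n)) :
    ∑ i ∈ S, ((a i : ℝ) + if i ∈ ({j} : Finset (Fin n)) then (M : ℝ) else 0)
      = (∑ i ∈ S, (a i : ℝ)) + if j ∈ S then (M : ℝ) else 0 := by
  rw [Finset.sum_add_distrib]
  congr 1
  simp [Finset.mem_singleton, Finset.sum_ite_eq']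

lemma A_nonneg (S : Finset (Fin n)) : (0:ℝ) ≤ ∑ i ∈ S, (a i : ℝ) :=
  Finset.sum_nonneg fun i _ => by positivity

lemma A_le_M (hM : M = ∑ i, a i) (S : Finset (Fin n)) :
    (∑ i ∈ S, (a i : ℝ)) ≤ (M : ℝ) := by
  have h1 : (∑ i ∈ S, (a i : ℝ)) ≤ ∑ i, (a i : ℝ) :=
    Finset.sum_le_sum_of_subset_of_nonneg (Finset.subset_univ S)
      (fun i _ _ => by positivity)
  calc (∑ i ∈ S, (a i : ℝ)) ≤ ∑ i, (a i : ℝ) := h1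
    _ = (M : ℝ) := by rw [hM]; push_cast; ring

lemma A_add_compl (hM : M = ∑ i, a i) (S : Finset (Fin n)) :
    (∑ i ∈ S, (a i : ℝ)) + (∑ i ∈ Sᶜ, (a i : ℝ)) = (M : ℝ) := by
  rw [Finset.sum_add_sum_compl, hM]; push_cast; ring

/-- The inner max-min value. -/
noncomputable def Fval (S₁ S₂ : Finset (Fin n)) : ℝ :=
  (budgetU n (fun i => (a i : ℝ)) (fun _ => (M : ℝ)) 1).sup'
    (budgetU_nonempty _ _ _ _)
    fun c => min (∑ i ∈ S₁, c i) (∑ i ∈ S₂, c i)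

lemma Fval_ge (S₁ S₂ D : Finset (Fin n)) (hD : D.card ≤ 1) :
    min (∑ i ∈ S₁, ((a i : ℝ) + if i ∈ D then (M : ℝ) else 0))
        (∑ i ∈ S₂, ((a i : ℝ) + if i ∈ D then (M : ℝ) else 0)) ≤ Fval a M S₁ S₂ :=
  Finset.le_sup' (fun c => min (∑ i ∈ S₁, c i) (∑ i ∈ S₂, c i))
    (mem_budgetU_of a M D hD)

lemma F_lb (hn : 2 ≤ n) (hneven : Even n) (hM : M = ∑ i, a i) (hMpos : 0 < M)
    (S₁ S₂ : Finset (Fin n)) (h1 : S₁.card = n / 2) (h2 : S₂.card = n / 2) :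
    (M : ℝ) / 2 ≤ Fval a M S₁ S₂ ∧
      (Fval a M S₁ S₂ = (M : ℝ) / 2 → (∑ i ∈ S₁, (a i : ℝ)) = (M : ℝ) / 2) := by
  obtain ⟨m, hm⟩ := hneven
  have hm2 : n / 2 = m := by omega
  have hMR : (0:ℝ) < M := by exact_mod_cast hMpos
  by_cases hdis : Disjoint S₁ S₂
  · -- S₂ = S₁ᶜ
    have hsub : S₂ ⊆ S₁ᶜ := fun i hi =>
      Finset.mem_compl.mpr (Finset.disjoint_right.mp hdis hi)
    have hcardc : S₁ᶜ.card = m := by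
      rw [Finset.card_compl, h1]; simp [Fintype.card_fin]; omega
    have hS2 : S₂ = S₁ᶜ :=
      Finset.eq_of_subset_of_card_le hsub (by rw [hcardc, h2, hm2])
    have hsum : (∑ i ∈ S₁, (a i : ℝ)) + (∑ i ∈ S₂, (a i : ℝ)) = (M : ℝ) := by
      rw [hS2]; exact A_add_compl a M hM S₁
    have hne1 : S₁.Nonempty := Finset.card_pos.mp (by rw [h1]; omega)
    have hne2 : S₂.Nonempty := Finset.card_pos.mp (by rw [h2]; omega)
    obtain ⟨j₁, hj₁⟩ := hne1
    obtain ⟨j₂, hj₂⟩ := hne2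
    have hj₁2 : j₁ ∉ S₂ := Finset.disjoint_left.mp hdis hj₁
    have hj₂1 : j₂ ∉ S₁ := Finset.disjoint_right.mp hdis hj₂
    have hF2 : (∑ i ∈ S₂, (a i : ℝ)) ≤ Fval a M S₁ S₂ := by
      have := Fval_ge a M S₁ S₂ {j₁} (by simp)
      rw [sum_budget_singleton, sum_budget_singleton] at this
      rw [if_pos hj₁, if_neg hj₁2] at this
      have hle : (∑ i ∈ S₂, (a i : ℝ)) + 0 ≤ (∑ i ∈ S₁, (a i : ℝ)) + M := by
        have := A_le_M a M hM S₂
        have := A_nonneg a S₁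
        linarith
      rw [min_eq_right (by linarith)] at this
      linarith
    have hF1 : (∑ i ∈ S₁, (a i : ℝ)) ≤ Fval a M S₁ S₂ := by
      have := Fval_ge a M S₁ S₂ {j₂} (by simp)
      rw [sum_budget_singleton, sum_budget_singleton] at this
      rw [if_neg hj₂1, if_pos hj₂] at this
      have hle : (∑ i ∈ S₁, (a i : ℝ)) ≤ (∑ i ∈ S₂, (a i : ℝ)) + M := by
        have := A_le_M a M hM S₁
        have := A_nonneg a S₂
        linarith
      rw [min_eq_left (by linarith)] at this
      linarith
    refine ⟨by linarith, fun hEq => by linarith [hEq ▸ hF1, hEq ▸ hF2]⟩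
  · obtain ⟨j, hj1, hj2⟩ := Finset.not_disjoint_iff.mp hdis
    have hMF : (M : ℝ) ≤ Fval a M S₁ S₂ := by
      have := Fval_ge a M S₁ S₂ {j} (by simp)
      rw [sum_budget_singleton, sum_budget_singleton] at this
      rw [if_pos hj1, if_pos hj2] at this
      have h1' := A_nonneg a S₁
      have h2' := A_nonneg a S₂
      exact le_trans (le_min (by linarith) (by linarith)) this
    exact ⟨by linarith, fun hEq => by rw [hEq] at hMF; linarith⟩

lemma F_ub (hM : M = ∑ i, a i) (S : Finset (Fin n))
    (hSsum : (∑ i ∈ S, (a i : ℝ)) = (M : ℝ) / 2) :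
    Fval a M S Sᶜ ≤ (M : ℝ) / 2 := by
  have hcompl : (∑ i ∈ Sᶜ, (a i : ℝ)) = (M : ℝ) / 2 := by
    have := A_add_compl a M hM S
    linarith
  apply Finset.sup'_le
  intro c hc
  obtain ⟨D, hDmem, rfl⟩ := Finset.mem_image.mp hc
  have hD : D.card ≤ 1 := (Finset.mem_filter.mp hDmem).2
  rcases D.eq_empty_or_nonempty with rfl | hne
  · simp [hSsum, hcompl]
  · obtain ⟨j, rfl⟩ := Finset.card_eq_one.mp (le_antisymm hD hne.card_pos)
    rw [sum_budget_singleton, sum_budget_singleton]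
    by_cases hjS : j ∈ S
    · have : j ∉ Sᶜ := by simpa using hjS
      rw [if_neg this]
      exact le_trans (min_le_right _ _) (by rw [hcompl]; simp)
    · rw [if_neg hjS]
      exact le_trans (min_le_left _ _) (by rw [hSsum]; simp)

end helper

/-- correctness of the reduction from the equal-cardinality partition
problem to the min-max-min selection problem with `p = n/2`, `ĉ = a`, `d = M`,
`Γ = 1` and `K = 2`. -/
theorem selection_partition_reduction (n : ℕ) (hn : 2 ≤ n) (hneven : Even n)
    (a : Fin n → ℕ) (M : ℕ) (hM : M = ∑ i, a i) (hMpos : 0 < M) :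
    (((Finset.univ.filter fun S : Finset (Fin n) => S.card = n / 2) ×ˢ
        (Finset.univ.filter fun S : Finset (Fin n) => S.card = n / 2)).inf'
        ((selection_nonempty n (n / 2) (Nat.div_le_self n 2)).product
          (selection_nonempty n (n / 2) (Nat.div_le_self n 2)))
        fun p => (budgetU n (fun i => (a i : ℝ)) (fun _ => (M : ℝ)) 1).sup'
          (budgetU_nonempty _ _ _ _)
          fun c => min (∑ i ∈ p.1, c i) (∑ i ∈ p.2, c i)) = (M : ℝ) / 2 ↔
    ∃ S : Finset (Fin n), S.card = n / 2 ∧ (∑ i ∈ S, (a i : ℝ)) = (M : ℝ) / 2 := by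
  have hfun : (fun p : Finset (Fin n) × Finset (Fin n) =>
      (budgetU n (fun i => (a i : ℝ)) (fun _ => (M : ℝ)) 1).sup'
        (budgetU_nonempty _ _ _ _)
        fun c => min (∑ i ∈ p.1, c i) (∑ i ∈ p.2, c i)) =
      fun p => Fval a M p.1 p.2 := rfl
  rw [hfun]
  constructor
  · intro h
    obtain ⟨p, hp, hpe⟩ := Finset.exists_mem_eq_inf'
      ((selection_nonempty n (n / 2) (Nat.div_le_self n 2)).product
        (selection_nonempty n (n / 2) (Nat.div_le_self n 2)))
      (fun p : Finset (Fin n) × Finset (Fin n) => Fval a M p.1 p.2)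
    rw [h] at hpe
    obtain ⟨hp1, hp2⟩ := Finset.mem_product.mp hp
    have h1 := (Finset.mem_filter.mp hp1).2
    have h2 := (Finset.mem_filter.mp hp2).2
    exact ⟨p.1, h1, (F_lb a M hn hneven hM hMpos p.1 p.2 h1 h2).2 hpe.symm⟩
  · rintro ⟨S, hScard, hSsum⟩
    have hccard : Sᶜ.card = n / 2 := by
      obtain ⟨m, hm⟩ := hneven
      rw [Finset.card_compl, hScard]
      simp [Fintype.card_fin]
      omega
    have hmem : (S, Sᶜ) ∈
        ((Finset.univ.filter fun T : Finset (Fin n) => T.card = n / 2) ×ˢ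
         (Finset.univ.filter fun T : Finset (Fin n) => T.card = n / 2)) :=
      Finset.mem_product.mpr ⟨Finset.mem_filter.mpr ⟨Finset.mem_univ _, hScard⟩,
        Finset.mem_filter.mpr ⟨Finset.mem_univ _, hccard⟩⟩
    refine le_antisymm (le_trans (Finset.inf'_le _ hmem) (F_ub a M hM S hSsum)) ?_
    apply Finset.le_inf'
    rintro ⟨S₁, S₂⟩ hp
    obtain ⟨hp1, hp2⟩ := Finset.mem_product.mp hp
    exact (F_lb a M hn hneven hM hMpos S₁ S₂
      (Finset.mem_filter.mp hp1).2 (Finset.mem_filter.mp hp2).2).1
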